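/- Define c(α) = e^{−α²/2}·( I₀(α²/2) + I₁(α²/2) ) for α > 0, where I_ν is the modified Bessel function of the first kind. Then c(α) = (2/(α√π)) · ∫₀¹ erf(α√(1−s²)) ds. -/

import Mathlib

open Real MeasureTheory intervalIntegral

/-- The error function `erf x = (2/√π) ∫₀ˣ e^{-t²} dt`. -/
noncomputable def erf (x : ℝ) : ℝ := 2 / Real.sqrt π * ∫ t in (0 : ℝ)..x, Real.exp (-t ^ 2)

/-- The modified Bessel function of the first kind of integer order `n`,
via the integral representation `Iₙ(x) = (1/π) ∫₀^π e^{x cos θ} cos(nθ) dθ`. -/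
noncomputable def besselI (n : ℕ) (x : ℝ) : ℝ :=
  (1 / π) * ∫ θ in (0 : ℝ)..π, Real.exp (x * Real.cos θ) * Real.cos (n * θ)

lemma exp_neg_sq_cont : Continuous fun t : ℝ => Real.exp (-t ^ 2) := by continuity

lemma erf_hasDerivAt (x : ℝ) :
    HasDerivAt erf (2 / Real.sqrt π * Real.exp (-x ^ 2)) x := by
  have h := intervalIntegral.integral_hasDerivAt_right
    (exp_neg_sq_cont.intervalIntegrable 0 x)
    (exp_neg_sq_cont.stronglyMeasurableAtFilter volume (nhds x))
    exp_neg_sq_cont.continuousAt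
  exact h.const_mul (2 / Real.sqrt π)

lemma erf_continuous : Continuous erf := by
  have : Differentiable ℝ erf := fun x => (erf_hasDerivAt x).differentiableAt
  exact this.continuous

lemma erf_zero : erf 0 = 0 := by simp [erf]

theorem c_alpha_integral_rep (α : ℝ) (hα : 0 < α) :
    Real.exp (-α ^ 2 / 2) * (besselI 0 (α ^ 2 / 2) + besselI 1 (α ^ 2 / 2)) =
      2 / (α * Real.sqrt π) * ∫ s in (0 : ℝ)..1, erf (α * Real.sqrt (1 - s ^ 2)) := by
  have hπ : (0 : ℝ) < π := Real.pi_pos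
  have hsπ : (0 : ℝ) < Real.sqrt π := Real.sqrt_pos.mpr hπ
  set J : ℝ := ∫ φ in (0 : ℝ)..(π / 2),
      Real.exp (-(α ^ 2 * Real.sin φ ^ 2)) * Real.cos φ ^ 2 with hJdef
  -- the common "g" function
  set g : ℝ → ℝ := fun φ => 2 * (Real.exp (-(α ^ 2 * Real.sin φ ^ 2)) * Real.cos φ ^ 2)
    with hg
  have hgcont : Continuous g := by continuity
  have hgJ : (∫ φ in (0 : ℝ)..(π / 2), g φ) = 2 * J := by
    rw [hJdef, ← intervalIntegral.integral_const_mul]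
  -- ==================== LHS ====================
  have lhs_eq : Real.exp (-α ^ 2 / 2) * (besselI 0 (α ^ 2 / 2) + besselI 1 (α ^ 2 / 2))
      = 4 / π * J := by
    have hA : IntervalIntegrable (fun θ : ℝ => Real.exp (α ^ 2 / 2 * Real.cos θ))
        volume 0 π := (by continuity : Continuous _).intervalIntegrable 0 π
    have hB : IntervalIntegrable
        (fun θ : ℝ => Real.exp (α ^ 2 / 2 * Real.cos θ) * Real.cos θ)
        volume 0 π := (by continuity : Continuous _).intervalIntegrable 0 π
    have h0 : besselI 0 (α ^ 2 / 2)
        = (1 / π) * ∫ θ in (0 : ℝ)..π, Real.exp (α ^ 2 / 2 * Real.cos θ) := by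
      simp [besselI]
    have h1 : besselI 1 (α ^ 2 / 2)
        = (1 / π) * ∫ θ in (0 : ℝ)..π, Real.exp (α ^ 2 / 2 * Real.cos θ) * Real.cos θ := by
      simp [besselI]
    rw [h0, h1, ← mul_add, ← intervalIntegral.integral_add hA hB]
    rw [mul_left_comm, ← intervalIntegral.integral_const_mul]
    have key : ∀ θ : ℝ,
        Real.exp (-α ^ 2 / 2) * (Real.exp (α ^ 2 / 2 * Real.cos θ)
          + Real.exp (α ^ 2 / 2 * Real.cos θ) * Real.cos θ) = g (θ / 2) := by
      intro θ
      have h2 : Real.cos θ = 2 * Real.cos (θ / 2) ^ 2 - 1 := by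
        rw [← Real.cos_two_mul]; ring_nf
      rw [hg]
      simp only
      rw [Real.sin_sq, h2]
      set c := Real.cos (θ / 2)
      have e1 : Real.exp (-α ^ 2 / 2) *
          (Real.exp (α ^ 2 / 2 * (2 * c ^ 2 - 1))
            + Real.exp (α ^ 2 / 2 * (2 * c ^ 2 - 1)) * (2 * c ^ 2 - 1))
          = Real.exp (-α ^ 2 / 2 + α ^ 2 / 2 * (2 * c ^ 2 - 1)) * (2 * c ^ 2) := by
        rw [Real.exp_add]; ring
      rw [e1, show -α ^ 2 / 2 + α ^ 2 / 2 * (2 * c ^ 2 - 1) = -(α ^ 2 * (1 - c ^ 2)) by ring]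
      ring
    have : (∫ θ in (0 : ℝ)..π, Real.exp (-α ^ 2 / 2) *
        (Real.exp (α ^ 2 / 2 * Real.cos θ) + Real.exp (α ^ 2 / 2 * Real.cos θ) * Real.cos θ))
        = ∫ θ in (0 : ℝ)..π, g (θ / 2) := by
      exact intervalIntegral.integral_congr fun θ _ => key θ
    rw [this, intervalIntegral.integral_comp_div g (two_ne_zero), smul_eq_mul]
    norm_num [hgJ]
    ring
  -- ==================== RHS ====================
  -- step 1 : substitution s = cos φ
  have hsub : (∫ s in (0 : ℝ)..1, erf (α * Real.sqrt (1 - s ^ 2)))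
      = ∫ φ in (0 : ℝ)..(π / 2), erf (α * Real.sin φ) * Real.sin φ := by
    have hgc : Continuous fun s : ℝ => erf (α * Real.sqrt (1 - s ^ 2)) := by
      apply erf_continuous.comp
      continuity
    have h := intervalIntegral.integral_comp_smul_deriv
      (a := π / 2) (b := 0) (f := Real.cos) (f' := fun φ => -Real.sin φ)
      (g := fun s => erf (α * Real.sqrt (1 - s ^ 2)))
      (fun x _ => Real.hasDerivAt_cos x)
      (Real.continuous_sin.neg.continuousOn) hgc
    simp only [Real.cos_pi_div_two, Real.cos_zero, Function.comp] at h
    rw [← h, intervalIntegral.integral_symm]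
    rw [← intervalIntegral.integral_neg]
    apply intervalIntegral.integral_congr
    intro x hx
    rw [Set.uIcc_of_le (by positivity : (0:ℝ) ≤ π / 2)] at hx
    have hs : 0 ≤ Real.sin x :=
      Real.sin_nonneg_of_nonneg_of_le_pi hx.1 (le_trans hx.2 (by linarith))
    have : Real.sqrt (1 - Real.cos x ^ 2) = Real.sin x := by
      rw [show 1 - Real.cos x ^ 2 = Real.sin x ^ 2 by rw [Real.sin_sq], Real.sqrt_sq hs]
    simp only [this, smul_eq_mul]
    ring
  -- step 2 : integration by parts
  have hibp : (∫ φ in (0 : ℝ)..(π / 2), erf (α * Real.sin φ) * Real.sin φ)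
      = 2 * α / Real.sqrt π * J := by
    have hu : ∀ x ∈ Set.uIcc (0 : ℝ) (π / 2),
        HasDerivAt (fun φ => erf (α * Real.sin φ))
          (2 / Real.sqrt π * Real.exp (-(α * Real.sin x) ^ 2) * (α * Real.cos x)) x := by
      intro x _
      have h1 : HasDerivAt (fun φ : ℝ => α * Real.sin φ) (α * Real.cos x) x :=
        (Real.hasDerivAt_sin x).const_mul α
      have h2 := (erf_hasDerivAt (α * Real.sin x)).comp x h1
      exact h2
    have hv : ∀ x ∈ Set.uIcc (0 : ℝ) (π / 2),
        HasDerivAt (fun φ => -Real.cos φ) (Real.sin x) x := by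
      intro x _
      have h3 := (Real.hasDerivAt_cos x).neg
      rw [neg_neg] at h3
      exact h3
    have hu' : IntervalIntegrable
        (fun x => 2 / Real.sqrt π * Real.exp (-(α * Real.sin x) ^ 2) * (α * Real.cos x))
        volume 0 (π / 2) := (by continuity : Continuous _).intervalIntegrable _ _
    have hv' : IntervalIntegrable Real.sin volume 0 (π / 2) :=
      Real.continuous_sin.intervalIntegrable _ _
    have h := intervalIntegral.integral_mul_deriv_eq_deriv_mul hu hv hu' hv'
    simp only [Real.sin_pi_div_two, Real.cos_pi_div_two, Real.sin_zero, Real.cos_zero,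
      mul_one, mul_zero, neg_zero, mul_neg, erf_zero] at h
    rw [h]
    have : (∫ x in (0 : ℝ)..(π / 2),
        -(2 / Real.sqrt π * Real.exp (-(α * Real.sin x) ^ 2) * (α * Real.cos x) * Real.cos x))
        = -(2 * α / Real.sqrt π) * J := by
      rw [hJdef, ← intervalIntegral.integral_const_mul]
      apply intervalIntegral.integral_congr
      intro x _
      simp only [mul_pow]
      ring
    rw [this]
    ring
  have hps : Real.sqrt π * Real.sqrt π = π := Real.mul_self_sqrt hπ.le
  have hc : 2 / (α * Real.sqrt π) * (2 * α / Real.sqrt π) = 4 / π := by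
    rw [div_mul_div_comm, show (2 : ℝ) * (2 * α) = α * 4 by ring,
      show α * Real.sqrt π * Real.sqrt π = α * π by rw [mul_assoc, hps],
      mul_div_mul_left _ _ hα.ne']
  rw [lhs_eq, hsub, hibp, ← mul_assoc, hc]
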